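/- arXiv:2204.07539 — 3 statements merged into one kernel-verified Lean document; each statement's English description precedes it below -/
import Mathlib

section
/- Let R, L, C > 0, let A = [[-1/(RC), 1/C], [-1/L, 0]] ∈ ℝ^{2×2}, let V_DC > 0 and B = (0, V_DC/(2L)) ∈ ℝ². Let P ∈ ℝ^{2×2} be symmetric and satisfy AᵀP + PA = -I. Let c ∈ ℝ with 0 ≤ c < 1, let γ : ℝ → ℝ satisfy |γ(t)| ≤ c for all t, and let e : ℝ → ℝ² be differentiable with e'(t) = A·e(t) + (u(t) - γ(t))·B, where u(t) = -sign(Bᵀ·P·e(t)) (with sign(s) = 1 if s ≥ 0 and sign(s) = -1 otherwise). Then for all t, the function V(t) = e(t)ᵀ·P·e(t) satisfies V'(t) ≤ -‖e(t)‖₂². -/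
open Matrix

/-- The sign function used in the switching policy: `+1` if `s ≥ 0`, `-1` otherwise. -/
noncomputable def mySign (s : ℝ) : ℝ := if 0 ≤ s then 1 else -1

/-- Differential-inequality content of Theorem 1: for the half-bridge inverter error
dynamics `ė = A e + (u - γ)·B` with `A = [[-1/(RC), 1/C], [-1/L, 0]]`,
`B = (0, V_DC/(2L))`, disturbance `|γ(t)| ≤ c < 1`, symmetric `P` solving
`AᵀP + PA = -I`, and switching policy `u = -sign(BᵀPe)`, the Lyapunov function
`V(t) = e(t)ᵀPe(t)` satisfies `V'(t) ≤ -‖e(t)‖₂²`. -/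
theorem stmt_4 (R L C V_DC : ℝ) (hR : 0 < R) (hL : 0 < L) (hC : 0 < C)
    (hV : 0 < V_DC)
    (A : Matrix (Fin 2) (Fin 2) ℝ) (hA : A = !![-1/(R*C), 1/C; -1/L, 0])
    (B : Fin 2 → ℝ) (hB : B = ![0, V_DC/(2*L)])
    (P : Matrix (Fin 2) (Fin 2) ℝ) (hPsymm : Pᵀ = P)
    (hP : Aᵀ * P + P * A = -1)
    (c : ℝ) (hc0 : 0 ≤ c) (hc1 : c < 1)
    (γ : ℝ → ℝ) (hγ : ∀ t, |γ t| ≤ c)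
    (e : ℝ → Fin 2 → ℝ)
    (u : ℝ → ℝ) (hu : ∀ t, u t = -mySign (B ⬝ᵥ P.mulVec (e t)))
    (he : ∀ t, HasDerivAt e (A.mulVec (e t) + (u t - γ t) • B) t) :
    ∀ t, deriv (fun s => e s ⬝ᵥ P.mulVec (e s)) t ≤ -(e t ⬝ᵥ e t) := by
  intro t
  set v : Fin 2 → ℝ := A.mulVec (e t) + (u t - γ t) • B with hv
  have h0 : HasDerivAt (fun s => e s 0) (v 0) t := hasDerivAt_pi.mp (he t) 0
  have h1 : HasDerivAt (fun s => e s 1) (v 1) t := hasDerivAt_pi.mp (he t) 1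
  have hD : HasDerivAt (fun s => e s ⬝ᵥ P.mulVec (e s))
      (v ⬝ᵥ P.mulVec (e t) + e t ⬝ᵥ P.mulVec v) t := by
    have h := (h0.mul (((h0.const_mul (P 0 0)).add (h1.const_mul (P 0 1))))).add
      (h1.mul (((h0.const_mul (P 1 0)).add (h1.const_mul (P 1 1)))))
    have hfe : (fun s => e s ⬝ᵥ P.mulVec (e s)) =
        fun s => e s 0 * (P 0 0 * e s 0 + P 0 1 * e s 1)
          + e s 1 * (P 1 0 * e s 0 + P 1 1 * e s 1) := by
      funext s
      simp [dotProduct, mulVec, Fin.sum_univ_two]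
    rw [hfe]
    refine h.congr_deriv ?_
    simp [dotProduct, mulVec, Fin.sum_univ_two]
    ring
  rw [hD.deriv]
  -- scalar data
  have hsym : P 0 1 = P 1 0 := by
    have := congrFun (congrFun hPsymm 1) 0
    simpa [Matrix.transpose_apply] using this
  have h00 := congrFun (congrFun hP 0) 0
  have h01 := congrFun (congrFun hP 0) 1
  have h10 := congrFun (congrFun hP 1) 0
  have h11 := congrFun (congrFun hP 1) 1
  simp [Matrix.mul_apply, Fin.sum_univ_two, Matrix.transpose_apply, Matrix.one_apply] at h00 h01 h10 h11
  -- key sign fact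
  set s : ℝ := B ⬝ᵥ P.mulVec (e t) with hs
  have hus : (u t - γ t) * s ≤ 0 := by
    have hg := hγ t
    rw [hu t, mySign, ← hs]
    by_cases h : 0 ≤ s
    · simp only [h, if_true]
      have : -1 - γ t ≤ 0 := by
        have := abs_le.mp hg
        linarith
      nlinarith
    · simp only [h, if_false]
      push_neg at h
      have : 0 ≤ -(-1) - γ t := by
        have := abs_le.mp hg
        linarith
      nlinarith
  have hident : v ⬝ᵥ P.mulVec (e t) + e t ⬝ᵥ P.mulVec v
      = -(e t ⬝ᵥ e t) + 2 * ((u t - γ t) * s) := by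
    simp only [hv, hs]
    simp [dotProduct, mulVec, Fin.sum_univ_two, Pi.add_apply, Pi.smul_apply, smul_eq_mul]
    linear_combination (e t 0 * e t 0) * h00 + (e t 0 * e t 1) * h01
      + (e t 1 * e t 0) * h10 + (e t 1 * e t 1) * h11
      + ((u t - γ t) * (e t 0 * B 1 - e t 1 * B 0)) * hsym
  rw [hident]
  linarith
end

section
/- Let R, L, C > 0 and α > 0. Define A = [[-1/(RC), 1/C], [-1/L, 0]] ∈ ℝ^{2×2} and P = (α/2)·[[RC + RC²/L, -C], [-C, RL + L/R + RC]] ∈ ℝ^{2×2}. Then AᵀP + PA = -α·I. -/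
open Matrix

/-- Explicit closed-form solution of the Lyapunov equation for the half-bridge
inverter: with `A = [[-1/(RC), 1/C], [-1/L, 0]]` and
`P = (α/2)·[[RC + RC²/L, -C], [-C, RL + L/R + RC]]`, one has `AᵀP + PA = -αI`. -/
theorem stmt_6 (R L C α : ℝ) (hR : 0 < R) (hL : 0 < L) (hC : 0 < C) (hα : 0 < α)
    (A P : Matrix (Fin 2) (Fin 2) ℝ)
    (hA : A = !![-1/(R*C), 1/C; -1/L, 0])
    (hP : P = (α/2) • !![R*C + R*C^2/L, -C; -C, R*L + L/R + R*C]) :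
    Aᵀ * P + P * A = (-α) • (1 : Matrix (Fin 2) (Fin 2) ℝ) := by
  subst hA hP
  have hR' := hR.ne'
  have hL' := hL.ne'
  have hC' := hC.ne'
  ext i j
  fin_cases i <;> fin_cases j <;>
    simp [Matrix.mul_apply, Fin.sum_univ_succ, Matrix.one_apply] <;>
    field_simp <;> ring
end

section
/- Let R, L, C > 0 and α > 0. Then the matrix P = (α/2)·[[RC + RC²/L, -C], [-C, RL + L/R + RC]] ∈ ℝ^{2×2} is symmetric and positive definite. -/
open Matrix

/-- The explicit Lyapunov matrix `P = (α/2)·[[RC + RC²/L, -C], [-C, RL + L/R + RC]]`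
is symmetric and positive definite for all `R, L, C, α > 0`. -/
theorem stmt_7 (R L C α : ℝ) (hR : 0 < R) (hL : 0 < L) (hC : 0 < C) (hα : 0 < α)
    (P : Matrix (Fin 2) (Fin 2) ℝ)
    (hP : P = (α/2) • !![R*C + R*C^2/L, -C; -C, R*L + L/R + R*C]) :
    Pᵀ = P ∧ P.PosDef := by
  subst hP
  have hsymm : ((α/2) • !![R*C + R*C^2/L, -C; -C, R*L + L/R + R*C])ᵀ
      = (α/2) • !![R*C + R*C^2/L, -C; -C, R*L + L/R + R*C] := by
    ext i j
    fin_cases i <;> fin_cases j <;> simp [Matrix.transpose_apply]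
  refine ⟨hsymm, ?_, ?_⟩
  · exact hsymm
  · intro x hx
    have h01 : x 0 ≠ 0 ∨ x 1 ≠ 0 := by
      by_contra h
      push_neg at h
      apply hx
      ext i; fin_cases i <;> simp [h.1, h.2]
    have key : ∀ u v : ℝ, (u ≠ 0 ∨ v ≠ 0) →
        0 < (α/2) * ((R*C + R*C^2/L) * u^2 - 2*C*u*v + (R*L + L/R + R*C) * v^2) := by
      intro u v huv
      have ha : 0 < R*C + R*C^2/L := by positivity
      have hd : 0 < R*L + L/R + R*C := by positivity
      have hdet : (R*C + R*C^2/L) * (R*L + L/R + R*C) - C^2 > 0 := by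
        have h1 : (R*C^2/L) * (L/R) = C^2 := by
          field_simp
        nlinarith [mul_pos hR hC, mul_pos hR hL, mul_pos hC hL,
          mul_pos (mul_pos hR hC) (mul_pos hR hL), div_pos (mul_pos hR (pow_pos hC 2)) hL,
          div_pos hL hR, mul_pos ha hd]
      have hq : 0 < (R*C + R*C^2/L) * u^2 - 2*C*u*v + (R*L + L/R + R*C) * v^2 := by
        by_cases hv : v = 0
        · have hu : u ≠ 0 := by tauto
          subst hv
          have := sq_pos_of_ne_zero hu
          nlinarith [mul_pos ha this]
        · nlinarith [sq_nonneg ((R*C + R*C^2/L)*u - C*v),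
            mul_pos hdet (sq_pos_of_ne_zero hv), mul_pos ha hd, sq_nonneg u]
      positivity
    have := key (x 0) (x 1) h01
    simp only [Finsupp.sum_fintype, zero_mul, mul_zero, star_zero, add_zero, implies_true,
      Matrix.smul_mulVec, Matrix.mulVec, dotProduct,
      Fin.sum_univ_two, Matrix.smul_apply, smul_eq_mul, Matrix.cons_val_zero,
      Matrix.cons_val_one, Matrix.head_cons, Matrix.cons_val', Matrix.head_fin_const,
      Matrix.empty_val', Matrix.cons_val_fin_one, star_trivial, Pi.smul_apply, Matrix.of_apply]
    nlinarith [this]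
end
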